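/- Let d ≥ 3 and for 0 ≤ i ≤ d−1 set g_i = r^{a^i} = a^{−i} r a^i in the Fabrykowski–Gupta group Γ_d, indices read modulo d. Then for all integers ℓ, k: (i) if 0 ≤ i, j ≤ d−1 satisfy 2 ≤ |i−j| ≤ d−2, the commutator [g_i^ℓ, g_j^k] is trivial; (ii) for every i, the commutator [g_i^ℓ, g_{i+1}^k] lies in the second level stabilizer Stab_{Γ_d}(2). Consequently the quotient Stab_{Γ_d}(1)/Stab_{Γ_d}(2) is abelian and is generated by the images of g_0, …, g_{d−1}. -/

import Mathlib

namespace FG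

variable (d : ℕ) [NeZero d]

/-- The rooted-tree automorphism `a` of the `d`-regular rooted tree (vertex set: the free
monoid `{0,…,d-1}^*`), acting by `(x w)^a = ((x+1) mod d) w`. -/
def aFun : List (Fin d) → List (Fin d)
  | [] => []
  | x :: w => (x + 1) :: w

def aInv : List (Fin d) → List (Fin d)
  | [] => []
  | x :: w => (x - 1) :: w

lemma aInv_aFun : ∀ w, aInv d (aFun d w) = w := by
  intro w; cases w <;> simp [aFun, aInv]

lemma aFun_aInv : ∀ w, aFun d (aInv d w) = w := by
  intro w; cases w <;> simp [aFun, aInv]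

def aPerm : Equiv.Perm (List (Fin d)) :=
  ⟨aFun d, aInv d, aInv_aFun d, aFun_aInv d⟩

/-- The rooted-tree automorphism `r`:
`(0 w)^r = 0 w^a`, `(x w)^r = x w` for `1 ≤ x ≤ d-2`, `((d-1) w)^r = (d-1) w^r`. -/
def rFun : List (Fin d) → List (Fin d)
  | [] => []
  | x :: w => if x = 0 then x :: aFun d w else if x = -1 then x :: rFun w else x :: w

def rInv : List (Fin d) → List (Fin d)
  | [] => []
  | x :: w => if x = 0 then x :: aInv d w else if x = -1 then x :: rInv w else x :: w

lemma rInv_rFun : ∀ w, rInv d (rFun d w) = w := by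
  intro w
  induction w with
  | nil => simp [rFun, rInv]
  | cons x w ih =>
    by_cases h0 : x = 0
    · simp [rFun, rInv, h0, aInv_aFun]
    · by_cases h1 : x = -1
      · subst h1
        have hd : ¬ d = 1 := by simpa using h0
        simp [rFun, rInv, hd, ih]
      · simp [rFun, rInv, h0, h1]

lemma rFun_rInv : ∀ w, rFun d (rInv d w) = w := by
  intro w
  induction w with
  | nil => simp [rFun, rInv]
  | cons x w ih =>
    by_cases h0 : x = 0
    · simp [rFun, rInv, h0, aFun_aInv]
    · by_cases h1 : x = -1
      · subst h1
        have hd : ¬ d = 1 := by simpa using h0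
        simp [rFun, rInv, hd, ih]
      · simp [rFun, rInv, h0, h1]

def rPerm : Equiv.Perm (List (Fin d)) :=
  ⟨rFun d, rInv d, rInv_rFun d, rFun_rInv d⟩

/-- The Fabrykowski–Gupta group `Γ_d`, as the subgroup of the permutation group of the
free monoid `{0,…,d-1}^*` generated by the tree automorphisms `a` and `r`. -/
def Gamma : Subgroup (Equiv.Perm (List (Fin d))) :=
  Subgroup.closure {aPerm d, rPerm d}

/-- The generator `a` as an element of `Γ_d`. -/
def aG : ↥(Gamma d) :=
  ⟨aPerm d, Subgroup.subset_closure (Set.mem_insert _ _)⟩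

/-- The generator `r` as an element of `Γ_d`. -/
def rG : ↥(Gamma d) :=
  ⟨rPerm d, Subgroup.subset_closure (Set.mem_insert_iff.mpr (Or.inr rfl))⟩

/-- The `n`-th level stabilizer `Stab_{Γ_d}(n)`: all elements of `Γ_d` fixing every word
of length `n`. -/
def Stab (n : ℕ) : Subgroup ↥(Gamma d) where
  carrier := { g | ∀ w : List (Fin d), w.length = n → (g : Equiv.Perm (List (Fin d))) w = w }
  one_mem' := by intro w _; rfl
  mul_mem' := by
    intro g h hg hh w hw
    have : ((g * h : ↥(Gamma d)) : Equiv.Perm (List (Fin d))) w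
        = (g : Equiv.Perm (List (Fin d))) ((h : Equiv.Perm (List (Fin d))) w) := rfl
    rw [this, hh w hw, hg w hw]
  inv_mem' := by
    intro g hg w hw
    have h1 := hg w hw
    calc ((g⁻¹ : ↥(Gamma d)) : Equiv.Perm (List (Fin d))) w
        = (g : Equiv.Perm (List (Fin d)))⁻¹ ((g : Equiv.Perm (List (Fin d))) w) := by
          rw [h1]; rfl
      _ = w := Equiv.symm_apply_apply _ _

/-- The conjugate `g_i = r^{a^i} = a^{-i} r a^i` in `Γ_d`. -/
def gG (i : ℕ) : ↥(Gamma d) := (aG d ^ i)⁻¹ * rG d * aG d ^ i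

end FG

open scoped commutatorElement

open scoped Fin.NatCast Fin.IntCast Fin.CommRing
-- ============ auxiliary development ============
namespace FGaux
open FG

variable (d : ℕ) [NeZero d]

lemma aPerm_apply (w : List (Fin d)) : aPerm d w = aFun d w := rfl
lemma rPerm_apply (w : List (Fin d)) : rPerm d w = rFun d w := rfl

lemma aPow_apply (i : ℕ) (x : Fin d) (w : List (Fin d)) :
    (aPerm d ^ i) (x :: w) = (x + i) :: w := by
  induction i with
  | zero => simp
  | succ n ih =>
    rw [pow_succ', Equiv.Perm.mul_apply, ih, aPerm_apply]
    show _ :: _ = _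
    push_cast
    ring_nf

lemma aPow_inv_apply (i : ℕ) (x : Fin d) (w : List (Fin d)) :
    (aPerm d ^ i)⁻¹ (x :: w) = (x - i) :: w := by
  apply (aPerm d ^ i).injective
  rw [Equiv.Perm.inv_def, Equiv.apply_symm_apply, aPow_apply]
  simp

/-- explicit action of gG -/
lemma gG_apply (hd1 : d ≠ 1) (i : ℕ) (x : Fin d) (w : List (Fin d)) :
    ((gG d i : ↥(Gamma d)) : Equiv.Perm (List (Fin d))) (x :: w) =
      if x + (i : Fin d) = 0 then x :: aFun d w
      else if x + (i : Fin d) = -1 then x :: rFun d w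
      else x :: w := by
  have hcoe : ((gG d i : ↥(Gamma d)) : Equiv.Perm (List (Fin d)))
      = (aPerm d ^ i)⁻¹ * rPerm d * aPerm d ^ i := by
    simp [gG, aG, rG]
  rw [hcoe]
  simp only [Equiv.Perm.mul_apply, aPow_apply]
  rw [rPerm_apply]
  by_cases h0 : x + (i : Fin d) = 0
  · have hx : x = -(i : Fin d) := eq_neg_of_add_eq_zero_left h0
    subst hx
    simp [rFun, aPow_inv_apply]
  · by_cases h1 : x + (i : Fin d) = -1
    · have hx : x = -1 - (i : Fin d) := eq_sub_of_add_eq h1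
      subst hx
      simp only [sub_add_cancel] at h0 ⊢
      simp [rFun, hd1, aPow_inv_apply]
    · simp [rFun, h0, h1, aPow_inv_apply]


/-- Structural invariant: every element of `Γ_d` shifts the first letter by a constant `t`
and the second letter by an amount depending only on the first letter. -/
lemma key (g : Equiv.Perm (List (Fin d))) (hg : g ∈ Gamma d) :
    ∃ t : Fin d, (∀ x : Fin d, g [x] = [x + t]) ∧
      ∀ x : Fin d, ∃ s : Fin d, ∀ y : Fin d, g [x, y] = [x + t, y + s] := by
  induction hg using Subgroup.closure_induction with
  | mem z hz =>
    rcases hz with hz | hz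
    · subst hz
      exact ⟨1, fun x => rfl, fun x => ⟨0, fun y => by
        show aFun d [x, y] = _
        simp [aFun]⟩⟩
    · subst hz
      refine ⟨0, fun x => ?_, fun x => ?_⟩
      · show rFun d [x] = _
        by_cases h0 : x = 0
        · simp [rFun, aFun, h0]
        · by_cases h1 : x = -1
          · have hd1 : d ≠ 1 := by rintro rfl; exact h0 (Subsingleton.elim _ _)
            simp [rFun, h0, h1, hd1, aFun]
          · simp [rFun, h0, h1]
      · refine ⟨if x = 0 then 1 else 0, fun y => ?_⟩
        show rFun d [x, y] = _
        by_cases h0 : x = 0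
        · simp [rFun, aFun, h0]
        · by_cases h1 : x = -1
          · have hd1 : d ≠ 1 := by rintro rfl; exact h0 (Subsingleton.elim _ _)
            simp [rFun, h0, h1, hd1, aFun]
          · simp [rFun, h0, h1]
  | one => exact ⟨0, fun x => by simp, fun x => ⟨0, fun y => by simp⟩⟩
  | mul a b _ _ iha ihb =>
    obtain ⟨ta, ha1, ha2⟩ := iha
    obtain ⟨tb, hb1, hb2⟩ := ihb
    refine ⟨tb + ta, fun x => ?_, fun x => ?_⟩
    · rw [Equiv.Perm.mul_apply, hb1, ha1, add_assoc]
    · obtain ⟨sb, hsb⟩ := hb2 x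
      obtain ⟨sa, hsa⟩ := ha2 (x + tb)
      exact ⟨sb + sa, fun y => by
        rw [Equiv.Perm.mul_apply, hsb, hsa, add_assoc, add_assoc]⟩
  | inv a _ iha =>
    obtain ⟨t, h1, h2⟩ := iha
    refine ⟨-t, fun x => ?_, fun x => ?_⟩
    · have := h1 (x - t)
      rw [sub_add_cancel] at this
      rw [← this, Equiv.Perm.inv_def, Equiv.symm_apply_apply, sub_eq_add_neg]
    · obtain ⟨s, hs⟩ := h2 (x - t)
      refine ⟨-s, fun y => ?_⟩
      have := hs (y - s)
      rw [sub_add_cancel, sub_add_cancel] at this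
      rw [← this, Equiv.Perm.inv_def, Equiv.symm_apply_apply, sub_eq_add_neg, sub_eq_add_neg]

/-- second-letter shift function of an element of `Γ_d` -/
def psi (g : ↥(Gamma d)) (x : Fin d) : Fin d :=
  (((g : Equiv.Perm (List (Fin d)))) [x, 0]).getD 1 0

lemma key2 {g : ↥(Gamma d)} (hg : g ∈ Stab d 1) (x y : Fin d) :
    (g : Equiv.Perm (List (Fin d))) [x, y] = [x, y + psi d g x] := by
  obtain ⟨t, h1, h2⟩ := key d g g.2
  have ht : t = 0 := by
    have := (h1 x).symm.trans (hg [x] rfl)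
    simpa using this
  subst ht
  obtain ⟨s, hs⟩ := h2 x
  have hpsi : psi d g x = s := by
    have := hs 0
    simp only [add_zero] at this
    simp [psi, this]
  rw [hpsi, ← add_zero (x) ]
  simpa using hs y

lemma key2_inv {g : ↥(Gamma d)} (hg : g ∈ Stab d 1) (x y : Fin d) :
    ((g : Equiv.Perm (List (Fin d))))⁻¹ [x, y] = [x, y - psi d g x] := by
  have := key2 d hg x (y - psi d g x)
  rw [sub_add_cancel] at this
  rw [← this, Equiv.Perm.inv_def, Equiv.symm_apply_apply]

lemma psi_mul {g h : ↥(Gamma d)} (hg : g ∈ Stab d 1) (hh : h ∈ Stab d 1) (x : Fin d) :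
    psi d (g * h) x = psi d g x + psi d h x := by
  have step : ((g * h : ↥(Gamma d)) : Equiv.Perm (List (Fin d))) [x, (0 : Fin d)]
      = [x, 0 + psi d h x + psi d g x] := by
    show (g : Equiv.Perm (List (Fin d))) ((h : Equiv.Perm (List (Fin d))) [x, 0]) = _
    rw [key2 d hh, key2 d hg]
  unfold psi
  rw [step, key2 d hg x 0, key2 d hh x 0]
  simp
  ring

lemma stab2_of_psi {g : ↥(Gamma d)} (hg : g ∈ Stab d 1) (hp : ∀ x, psi d g x = 0) :
    g ∈ Stab d 2 := by
  intro w hw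
  match w, hw with
  | [x, y], _ =>
    rw [key2 d hg, hp, add_zero]


lemma gG_nil (i : ℕ) : ((gG d i : ↥(Gamma d)) : Equiv.Perm (List (Fin d))) [] = [] := by
  have hA : ∀ n : ℕ, (aPerm d ^ n) ([] : List (Fin d)) = [] := by
    intro n
    induction n with
    | zero => rfl
    | succ n ih => rw [pow_succ', Equiv.Perm.mul_apply, ih]; rfl
  have hcoe : ((gG d i : ↥(Gamma d)) : Equiv.Perm (List (Fin d)))
      = (aPerm d ^ i)⁻¹ * rPerm d * aPerm d ^ i := by
    simp [gG, aG, rG]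
  rw [hcoe]
  simp only [Equiv.Perm.mul_apply, hA]
  show (aPerm d ^ i)⁻¹ (rFun d []) = []
  show (aPerm d ^ i)⁻¹ ([] : List (Fin d)) = []
  apply (aPerm d ^ i).injective
  rw [Equiv.Perm.inv_def, Equiv.apply_symm_apply, hA]

lemma gG_comm (hd1 : d ≠ 1) (i j : ℕ)
    (hij : (i : Fin d) ≠ (j : Fin d))
    (hB : (i : Fin d) ≠ (j : Fin d) + 1)
    (hC : (j : Fin d) ≠ (i : Fin d) + 1) :
    Commute (gG d i) (gG d j) := by
  have key4 : ∀ x : Fin d, ¬(x + (i : Fin d) = 0 ∧ x + (j : Fin d) = 0) ∧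
      ¬(x + (i : Fin d) = 0 ∧ x + (j : Fin d) = -1) ∧
      ¬(x + (i : Fin d) = -1 ∧ x + (j : Fin d) = 0) ∧
      ¬(x + (i : Fin d) = -1 ∧ x + (j : Fin d) = -1) := by
    intro x
    refine ⟨fun ⟨c1, c3⟩ => hij (by linear_combination c1 - c3),
      fun ⟨c1, c4⟩ => hB (by linear_combination c1 - c4),
      fun ⟨c2, c3⟩ => hC (by linear_combination c3 - c2),
      fun ⟨c2, c4⟩ => hij (by linear_combination c2 - c4)⟩
  apply Subtype.ext
  apply Equiv.ext
  intro w
  show ((gG d i : ↥(Gamma d)) : Equiv.Perm (List (Fin d)))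
      (((gG d j : ↥(Gamma d)) : Equiv.Perm (List (Fin d))) w)
    = ((gG d j : ↥(Gamma d)) : Equiv.Perm (List (Fin d)))
      (((gG d i : ↥(Gamma d)) : Equiv.Perm (List (Fin d))) w)
  cases w with
  | nil => rw [gG_nil, gG_nil, gG_nil]
  | cons x w =>
    obtain ⟨e13, e14, e23, e24⟩ := key4 x
    by_cases c1 : x + (i : Fin d) = 0
    · have c3 : ¬ x + (j : Fin d) = 0 := fun h => e13 ⟨c1, h⟩
      have c4 : ¬ x + (j : Fin d) = -1 := fun h => e14 ⟨c1, h⟩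
      simp [gG_apply d hd1, hd1, c1, c3, c4]
    · by_cases c2 : x + (i : Fin d) = -1
      · have c3 : ¬ x + (j : Fin d) = 0 := fun h => e23 ⟨c2, h⟩
        have c4 : ¬ x + (j : Fin d) = -1 := fun h => e24 ⟨c2, h⟩
        simp [gG_apply d hd1, hd1, c1, c2, c3, c4]
      · by_cases c3 : x + (j : Fin d) = 0
        · simp [gG_apply d hd1, hd1, c1, c2, c3]
        · by_cases c4 : x + (j : Fin d) = -1 <;>
            simp [gG_apply d hd1, hd1, c1, c2, c3, c4]

lemma fin_facts (hd : 3 ≤ d) {j m : ℕ} (hm2 : 2 ≤ m) (hmd : m ≤ d - 2) :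
    (((j + m : ℕ) : Fin d) ≠ (j : Fin d)) ∧
    (((j + m : ℕ) : Fin d) ≠ (j : Fin d) + 1) ∧
    ((j : Fin d) ≠ ((j + m : ℕ) : Fin d) + 1) := by
  have hmd' : m < d := by omega
  have hmd1 : m + 1 < d := by omega
  have h1d : 1 < d := by omega
  have hc : ((j + m : ℕ) : Fin d) = (j : Fin d) + (m : Fin d) := by push_cast; ring
  refine ⟨fun h => ?_, fun h => ?_, fun h => ?_⟩
  · rw [hc] at h
    have hm0 : (m : Fin d) = 0 := by linear_combination h
    have := congrArg Fin.val hm0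
    rw [Fin.val_cast_of_lt hmd'] at this
    simp at this
    omega
  · rw [hc] at h
    have hm1 : (m : Fin d) = ((1 : ℕ) : Fin d) := by push_cast; linear_combination h
    have := congrArg Fin.val hm1
    rw [Fin.val_cast_of_lt hmd', Fin.val_cast_of_lt h1d] at this
    omega
  · rw [hc] at h
    have hm1 : ((m + 1 : ℕ) : Fin d) = ((0 : ℕ) : Fin d) := by push_cast; linear_combination - h
    have := congrArg Fin.val hm1
    rw [Fin.val_cast_of_lt hmd1, Fin.val_cast_of_lt (by omega : 0 < d)] at this
    omega


lemma gG_mem_stab1 (hd1 : d ≠ 1) (i : ℕ) : gG d i ∈ Stab d 1 := by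
  intro w hw
  match w, hw with
  | [x], _ =>
    rw [gG_apply d hd1]
    split_ifs <;> rfl

lemma psi_one (x : Fin d) : psi d 1 x = 0 := rfl

lemma psi_inv {g : ↥(Gamma d)} (hg : g ∈ Stab d 1) (x : Fin d) :
    psi d g⁻¹ x = - psi d g x := by
  have h0 : psi d (g⁻¹ * g) x = psi d g⁻¹ x + psi d g x :=
    psi_mul d (inv_mem hg) hg x
  rw [inv_mul_cancel] at h0
  rw [psi_one] at h0
  linear_combination -h0

lemma psi_pow {g : ↥(Gamma d)} (hg : g ∈ Stab d 1) (n : ℕ) (x : Fin d) :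
    psi d (g ^ n) x = n • psi d g x := by
  induction n with
  | zero => simp [psi_one]
  | succ n ih =>
    rw [pow_succ, psi_mul d (pow_mem hg n) hg, ih, succ_nsmul]

lemma psi_gG (hd1 : d ≠ 1) (i : ℕ) (x : Fin d) :
    psi d (gG d i) x = if x + (i : Fin d) = 0 then 1 else 0 := by
  unfold psi
  rw [gG_apply d hd1]
  by_cases h0 : x + (i : Fin d) = 0
  · simp [h0, aFun]
  · by_cases h1 : x + (i : Fin d) = -1 <;> simp [h0, h1, hd1, rFun, aFun]

lemma psi_list_prod (l : List ↥(Gamma d)) (hl : ∀ g ∈ l, g ∈ Stab d 1) (x : Fin d) :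
    psi d l.prod x = (l.map (fun g => psi d g x)).sum := by
  induction l with
  | nil => simp [psi_one]
  | cons a l ih =>
    have hl' : ∀ g ∈ l, g ∈ Stab d 1 := fun g hg => hl g (List.mem_cons_of_mem a hg)
    rw [List.prod_cons, List.map_cons, List.sum_cons,
      psi_mul d (hl a List.mem_cons_self) (list_prod_mem hl'), ih hl']

lemma stab2_le_stab1 : Stab d 2 ≤ Stab d 1 := by
  intro g hg w hw
  match w, hw with
  | [x], _ =>
    obtain ⟨t, h1, h2⟩ := key d g.1 g.2
    obtain ⟨s, hs⟩ := h2 x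
    have := (hs 0).symm.trans (hg [x, 0] rfl)
    have ht : t = 0 := by
      have hx := congrArg (fun l => l.headI) this
      simpa using hx
    rw [h1 x, ht, add_zero]

lemma comm_stab2 {x y : ↥(Gamma d)} (hx : x ∈ Stab d 1) (hy : y ∈ Stab d 1) :
    ⁅x, y⁆ ∈ Stab d 2 := by
  have hmem : x * y * x⁻¹ * y⁻¹ ∈ Stab d 1 :=
    mul_mem (mul_mem (mul_mem hx hy) (inv_mem hx)) (inv_mem hy)
  have : ⁅x, y⁆ = x * y * x⁻¹ * y⁻¹ := rfl
  rw [this]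
  apply stab2_of_psi d hmem
  intro z
  rw [psi_mul d (mul_mem (mul_mem hx hy) (inv_mem hx)) (inv_mem hy),
    psi_mul d (mul_mem hx hy) (inv_mem hx), psi_mul d hx hy,
    psi_inv d hx, psi_inv d hy]
  ring

end FGaux


theorem stmt_4 (d : ℕ) [NeZero d] (hd : 3 ≤ d) :
    (∀ i j : ℕ, i < d → j < d → 2 ≤ ((i : ℤ) - j).natAbs → ((i : ℤ) - j).natAbs ≤ d - 2 →
      ∀ ℓ k : ℤ, ⁅FG.gG d i ^ ℓ, FG.gG d j ^ k⁆ = 1) ∧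
    (∀ i : ℕ, ∀ ℓ k : ℤ, ⁅FG.gG d i ^ ℓ, FG.gG d (i + 1) ^ k⁆ ∈ FG.Stab d 2) ∧
    (∀ x ∈ FG.Stab d 1, ∀ y ∈ FG.Stab d 1, ⁅x, y⁆ ∈ FG.Stab d 2) ∧
    FG.Stab d 1 = Subgroup.closure (Set.range fun i : Fin d => FG.gG d (i : ℕ)) ⊔ FG.Stab d 2 := by
  have hd1 : d ≠ 1 := by omega
  have h3 : ∀ x ∈ FG.Stab d 1, ∀ y ∈ FG.Stab d 1, ⁅x, y⁆ ∈ FG.Stab d 2 :=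
    fun x hx y hy => FGaux.comm_stab2 d hx hy
  refine ⟨?_, ?_, h3, ?_⟩
  · intro i j hi hj hab2 habd ℓ k
    have hcomm : Commute (FG.gG d i) (FG.gG d j) := by
      rcases le_or_gt j i with h | h
      · have hm : ((i : ℤ) - j).natAbs = i - j := by omega
        rw [hm] at hab2 habd
        obtain ⟨A, B, C⟩ := FGaux.fin_facts d hd hab2 habd (j := j)
        have hje : j + (i - j) = i := by omega
        rw [hje] at A B C
        exact FGaux.gG_comm d hd1 i j A B C
      · have hm : ((i : ℤ) - j).natAbs = j - i := by omega
        rw [hm] at hab2 habd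
        obtain ⟨A, B, C⟩ := FGaux.fin_facts d hd hab2 habd (j := i)
        have hje : i + (j - i) = j := by omega
        rw [hje] at A B C
        exact FGaux.gG_comm d hd1 i j A.symm C B
    exact commutatorElement_eq_one_iff_commute.mpr (hcomm.zpow_zpow ℓ k)
  · intro i ℓ k
    exact h3 _ (zpow_mem (FGaux.gG_mem_stab1 d hd1 i) ℓ)
      _ (zpow_mem (FGaux.gG_mem_stab1 d hd1 (i + 1)) k)
  · apply le_antisymm
    · intro g hg
      set n : Fin d → ℕ := fun v => (FGaux.psi d g (-v)).val with hn
      set l : List ↥(FG.Gamma d) := (List.finRange d).map (fun v : Fin d => FG.gG d (v : ℕ) ^ n v)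
        with hl
      have hlmem : ∀ z ∈ l, z ∈ FG.Stab d 1 := by
        intro z hz
        rw [hl, List.mem_map] at hz
        obtain ⟨v, -, rfl⟩ := hz
        exact pow_mem (FGaux.gG_mem_stab1 d hd1 _) _
      have hstab1 : l.prod ∈ FG.Stab d 1 := list_prod_mem hlmem
      have hpsi : ∀ x, FGaux.psi d l.prod x = FGaux.psi d g x := by
        intro x
        rw [FGaux.psi_list_prod d l hlmem x]
        have hmap : l.map (fun z => FGaux.psi d z x)
            = (List.finRange d).map (fun v : Fin d => FGaux.psi d (FG.gG d (v : ℕ) ^ n v) x) := by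
          rw [hl, List.map_map]; rfl
        rw [hmap, ← Fin.sum_univ_def]
        have hterm : ∀ v : Fin d, FGaux.psi d (FG.gG d (v : ℕ) ^ n v) x
            = if v = -x then ((n v : ℕ) : Fin d) else 0 := by
          intro v
          rw [FGaux.psi_pow d (FGaux.gG_mem_stab1 d hd1 _) (n v) x, FGaux.psi_gG d hd1 _ x]
          simp only [Fin.cast_val_eq_self]
          by_cases h : v = -x
          · subst h
            simp [nsmul_eq_mul]
          · have hne : x + v ≠ 0 := fun hc => h (by linear_combination hc)
            simp [hne, h]
        rw [Finset.sum_congr rfl (fun v _ => hterm v),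
          Finset.sum_ite_eq' Finset.univ (-x) (fun v => ((n v : ℕ) : Fin d))]
        simp [hn, neg_neg, Fin.cast_val_eq_self]
      have hgh : g * l.prod⁻¹ ∈ FG.Stab d 2 := by
        apply FGaux.stab2_of_psi d (mul_mem hg (inv_mem hstab1))
        intro x
        rw [FGaux.psi_mul d hg (inv_mem hstab1), FGaux.psi_inv d hstab1, hpsi]
        ring
      have hcl : l.prod ∈ Subgroup.closure (Set.range fun i : Fin d => FG.gG d (i : ℕ)) := by
        apply list_prod_mem
        intro z hz
        rw [hl, List.mem_map] at hz
        obtain ⟨v, -, rfl⟩ := hz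
        exact pow_mem (Subgroup.subset_closure (Set.mem_range_self v)) _
      have hrw : g = (g * l.prod⁻¹) * l.prod := by group
      rw [hrw]
      exact mul_mem ((le_sup_right :
          FG.Stab d 2 ≤ Subgroup.closure (Set.range fun i : Fin d => FG.gG d (i : ℕ)) ⊔ FG.Stab d 2) hgh)
        ((le_sup_left :
          Subgroup.closure (Set.range fun i : Fin d => FG.gG d (i : ℕ)) ≤ _) hcl)
    · apply sup_le
      · rw [Subgroup.closure_le]
        rintro z ⟨v, rfl⟩
        exact FGaux.gG_mem_stab1 d hd1 _
      · exact FGaux.stab2_le_stab1 d
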